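/- arXiv:1510.05774 — 2 statements merged into one kernel-verified Lean document; each statement's English description precedes it below -/
import Mathlib

section
/- Let A be an arena, w : E → ℤ a weight function, t ∈ ℕ, and let σ be a winning strategy for Player 0 in (A, AvgEnergy_L(w, t)). For every finite play prefix u that is consistent with σ and satisfies EL(u) > t, the set { EL(ux) : ux is a finite play prefix consistent with σ and EL(ux') > t for every prefix x' of x } is bounded above, i.e., Peak(u) := sup of this set is a natural number (finite). -/
/-- An arena: a directed graph without terminal vertices, a set `V0` of Player 0's
vertices (Player 1 controls the complement), and an initial vertex. -/
structure Arena (V : Type) where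
  V0 : Set V
  E : V → V → Prop
  vI : V
  succ : ∀ v, ∃ v', E v v'

/-- A play: an infinite path starting in the initial vertex. -/
def Arena.Play {V : Type} (A : Arena V) (ρ : ℕ → V) : Prop :=
  ρ 0 = A.vI ∧ ∀ n, A.E (ρ n) (ρ (n + 1))

/-- The play prefix `ρ 0 ⋯ ρ n` as a list. -/
def prefixList {V : Type} (ρ : ℕ → V) (n : ℕ) : List V :=
  (List.range (n + 1)).map ρ

/-- A strategy for the player controlling the vertices in `p`. -/
def Arena.IsStrategy {V : Type} (A : Arena V) (p : Set V) (σ : List V → V) : Prop :=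
  ∀ (h : List V) (v : V), v ∈ p → A.E v (σ (h ++ [v]))

/-- Consistency of a play with a strategy of the player controlling `p`. -/
def Arena.ConsistentWith {V : Type} (A : Arena V) (p : Set V) (σ : List V → V) (ρ : ℕ → V) : Prop :=
  ∀ n, ρ n ∈ p → ρ (n + 1) = σ (prefixList ρ n)

/-- `σ` is a winning strategy for the player controlling `p` with objective `Obj`. -/
def Arena.WinningStrategy {V : Type} (A : Arena V) (p : Set V) (Obj : Set (ℕ → V))
    (σ : List V → V) : Prop :=
  A.IsStrategy p σ ∧ ∀ ρ, A.Play ρ → A.ConsistentWith p σ ρ → ρ ∈ Obj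

/-- Player 0 wins the game `(A, Win)`. -/
def Arena.Player0Wins {V : Type} (A : Arena V) (Win : Set (ℕ → V)) : Prop :=
  ∃ σ, A.WinningStrategy A.V0 Win σ

/-- `h` is a finite play prefix consistent with the strategy `σ` of the player controlling `p`. -/
def Arena.FinPrefix {V : Type} (A : Arena V) (p : Set V) (σ : List V → V) (h : List V) : Prop :=
  ∃ ρ n, A.Play ρ ∧ A.ConsistentWith p σ ρ ∧ h = prefixList ρ n

/-- A positional strategy only depends on the last vertex. -/
def Positional {X : Type} (σ : List X → X) : Prop :=
  ∀ (h : List X) (v : X), σ (h ++ [v]) = σ [v]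

/-- The energy level of the play prefix `ρ 0 ⋯ ρ n` is `EL w ρ n`:
the sum of the weights of its `n` edges. -/
def EL {V : Type} (w : V → V → ℤ) (ρ : ℕ → V) (n : ℕ) : ℤ :=
  ∑ i ∈ Finset.range n, w (ρ i) (ρ (i + 1))

/-- The energy level of a finite play prefix given as a list. -/
def ELl {V : Type} (w : V → V → ℤ) : List V → ℤ
  | [] => 0
  | [_] => 0
  | a :: b :: l => w a b + ELl w (b :: l)

/-- The average accumulated energy of the first `n` prefixes. -/
noncomputable def avgEL {V : Type} (w : V → V → ℤ) (ρ : ℕ → V) (n : ℕ) : ℝ :=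
  (∑ i ∈ Finset.range n, (EL w ρ i : ℝ)) / (n : ℝ)

/-- The lower-bounded energy objective. -/
def EnergyL {V : Type} (w : V → V → ℤ) : Set (ℕ → V) :=
  {ρ | ∀ n, 0 ≤ EL w ρ n}

/-- The lower- and upper-bounded energy objective. -/
def EnergyLU {V : Type} (w : V → V → ℤ) (cap : ℕ) : Set (ℕ → V) :=
  {ρ | ∀ n, 0 ≤ EL w ρ n ∧ EL w ρ n ≤ (cap : ℤ)}

/-- The average-energy objective: limsup of the averages is at most `t`. -/
def AvgE {V : Type} (w : V → V → ℤ) (t : ℝ) : Set (ℕ → V) :=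
  {ρ | Filter.limsup (fun n => (avgEL w ρ n : EReal)) Filter.atTop ≤ (t : EReal)}

/-- The lower-bounded average-energy objective. -/
def AvgEnergyL {V : Type} (w : V → V → ℤ) (t : ℝ) : Set (ℕ → V) :=
  EnergyL w ∩ AvgE w t

/-- The mean-payoff objective. -/
def MP {V : Type} (w : V → V → ℤ) (t : ℝ) : Set (ℕ → V) :=
  {ρ | Filter.limsup (fun n => (((EL w ρ n : ℝ) / (n : ℝ)) : EReal)) Filter.atTop ≤ (t : EReal)}

/-- A memory structure: initial memory state and update along edges. -/
structure Mem (V M : Type) where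
  mI : M
  upd : M → V → V → M

/-- Tracking the memory state along a play. -/
def Mem.track {V M : Type} (mem : Mem V M) (ρ : ℕ → V) : ℕ → M
  | 0 => mem.mI
  | n + 1 => mem.upd (Mem.track mem ρ n) (ρ n) (ρ (n + 1))

def Mem.runAux {V M : Type} (mem : Mem V M) : M → List V → M
  | m, [] => m
  | m, [_] => m
  | m, a :: b :: l => Mem.runAux mem (mem.upd m a b) (b :: l)

/-- `Upd⁺`: the memory state reached along a finite play prefix. -/
def Mem.run {V M : Type} (mem : Mem V M) (h : List V) : M :=
  Mem.runAux mem mem.mI h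

/-- The strategy `σ` is implemented by the memory structure `mem`
(via some next-move function). -/
def Arena.ImplementedBy {V M : Type} (A : Arena V) (mem : Mem V M) (σ : List V → V) : Prop :=
  ∃ nxt : V → M → V, ∀ (h : List V) (v : V), σ (h ++ [v]) = nxt v (mem.run (h ++ [v]))

/-- `σ` is a finite-state strategy of size `k`. -/
def Arena.FiniteStateOfSize {V : Type} (A : Arena V) (k : ℕ) (σ : List V → V) : Prop :=
  ∃ (M : Type) (inst : Fintype M) (mem : Mem V M),
    @Fintype.card M inst = k ∧ A.ImplementedBy mem σ

/-- The expanded arena `A × M`. -/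
def Arena.expand {V M : Type} (A : Arena V) (mem : Mem V M) : Arena (V × M) where
  V0 := {p | p.1 ∈ A.V0}
  E := fun p q => A.E p.1 q.1 ∧ q.2 = mem.upd p.2 p.1 q.1
  vI := (A.vI, mem.mI)
  succ := fun p => by
    obtain ⟨v', h⟩ := A.succ p.1
    exact ⟨(v', mem.upd p.2 p.1 v'), h, rfl⟩

/-- The extended play in `A × M` corresponding to a play in `A`. -/
def extendPlay {V M : Type} (mem : Mem V M) (ρ : ℕ → V) : ℕ → V × M :=
  fun n => (ρ n, Mem.track mem ρ n)

/-- `(A, Win) ≤_M (A × M, Win')`. -/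
def Reduces {V M : Type} (A : Arena V) (mem : Mem V M) (Win : Set (ℕ → V))
    (Win' : Set (ℕ → V × M)) : Prop :=
  ∀ ρ, A.Play ρ → (ρ ∈ Win ↔ extendPlay mem ρ ∈ Win')

/-- A recharge weight function (`none` is the recharge label `R`) assigns
non-positive weights to all (non-recharge) edges. -/
def RechargeWeights {V : Type} (A : Arena V) (w : V → V → Option ℤ) : Prop :=
  ∀ u v, A.E u v → ∀ k : ℤ, w u v = some k → k ≤ 0

/-- The recharge energy level of the prefix `ρ 0 ⋯ ρ n`: the capacity plus the
accumulated weight since the last `R`-edge. -/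
def ELcap {V : Type} (w : V → V → Option ℤ) (cap : ℕ) (ρ : ℕ → V) : ℕ → ℤ
  | 0 => (cap : ℤ)
  | n + 1 =>
    match w (ρ n) (ρ (n + 1)) with
    | none => (cap : ℤ)
    | some k => ELcap w cap ρ n + k

/-- The recharge objective. -/
def Recharge {V : Type} (w : V → V → Option ℤ) (cap : ℕ) : Set (ℕ → V) :=
  {ρ | ∀ n, 0 ≤ ELcap w cap ρ n}

/-- The average of the recharge energy levels of the first `n` prefixes. -/
noncomputable def avgELcap {V : Type} (w : V → V → Option ℤ) (cap : ℕ) (ρ : ℕ → V)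
    (n : ℕ) : ℝ :=
  (∑ i ∈ Finset.range n, (ELcap w cap ρ i : ℝ)) / (n : ℝ)

/-- The average-bounded recharge objective. -/
def AvgRecharge {V : Type} (w : V → V → Option ℤ) (cap : ℕ) (t : ℝ) : Set (ℕ → V) :=
  {ρ | Filter.limsup (fun n => (avgELcap w cap ρ n : EReal)) Filter.atTop ≤ (t : EReal)} ∩
    Recharge w cap

/-- The (max-)parity objective: the maximal color occurring infinitely often is even. -/
def ParityObj {V : Type} (Ω : V → ℕ) : Set (ℕ → V) :=
  {ρ | ∃ c, Even c ∧ {n | Ω (ρ n) = c}.Infinite ∧ ∀ d, {n | Ω (ρ n) = d}.Infinite → d ≤ c}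

section Aux

variable {V : Type}

lemma prefixList_length (ρ : ℕ → V) (n : ℕ) : (prefixList ρ n).length = n + 1 := by
  simp [prefixList]

lemma prefixList_succ (ρ : ℕ → V) (n : ℕ) :
    prefixList ρ (n + 1) = prefixList ρ n ++ [ρ (n + 1)] := by
  simp [prefixList, List.range_succ]

lemma prefixList_take (ρ : ℕ → V) {k n : ℕ} (h : k ≤ n) :
    (prefixList ρ n).take (k + 1) = prefixList ρ k := by
  simp [prefixList, ← List.map_take, List.take_range, Nat.min_eq_left (by omega : k + 1 ≤ n + 1)]

lemma prefixList_getD (ρ : ℕ → V) {n k : ℕ} (h : k ≤ n) (d : V) :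
    (prefixList ρ n).getD k d = ρ k := by
  rw [List.getD_eq_getElem _ _ (by simp [prefixList_length]; omega)]
  simp [prefixList]

lemma eq_prefixList_of_prefix {ρ : ℕ → V} {n k : ℕ} {h' : List V}
    (hpre : h' <+: prefixList ρ n) (hlen : h'.length = k + 1) : h' = prefixList ρ k := by
  have hk : k ≤ n := by
    have := hpre.length_le
    rw [prefixList_length] at this; omega
  have := List.prefix_iff_eq_take.mp hpre
  rw [this, hlen, prefixList_take ρ hk]

lemma finPrefix_mono (A : Arena V) (p : Set V) (σ : List V → V) {h h' : List V}
    (hp : A.FinPrefix p σ h) (hpre : h' <+: h) (hne : h' ≠ []) : A.FinPrefix p σ h' := by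
  obtain ⟨ρ, n, hplay, hcons, rfl⟩ := hp
  obtain ⟨k, hk⟩ : ∃ k, h'.length = k + 1 := by
    cases h' with
    | nil => exact absurd rfl hne
    | cons a l => exact ⟨l.length, by simp⟩
  exact ⟨ρ, k, hplay, hcons, eq_prefixList_of_prefix hpre hk⟩

lemma ELl_concat (w : V → V → ℤ) : ∀ (l : List V) (a b : V),
    ELl w ((a :: l) ++ [b]) = ELl w (a :: l) + w ((a :: l).getLast (by simp)) b := by
  intro l
  induction l with
  | nil => intro a b; simp [ELl]
  | cons c l ih =>
    intro a b
    have := ih c b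
    simp only [List.cons_append, ELl, List.append_eq] at this ⊢
    rw [this]
    simp [ELl]
    ring

lemma prefixList_getLast (ρ : ℕ → V) (n : ℕ) (h : prefixList ρ n ≠ []) :
    (prefixList ρ n).getLast h = ρ n := by
  rw [List.getLast_eq_getElem]
  simp [prefixList_length, prefixList]

lemma ELl_prefixList (w : V → V → ℤ) (ρ : ℕ → V) (n : ℕ) :
    ELl w (prefixList ρ n) = EL w ρ n := by
  induction n with
  | zero => simp [prefixList, EL, List.range_succ, ELl]
  | succ n ih =>
    obtain ⟨a, l, hal⟩ : ∃ a l, prefixList ρ n = a :: l := by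
      cases h : prefixList ρ n with
      | nil => exact absurd (by simp [h]) (by simp [prefixList_length] : (prefixList ρ n).length ≠ 0)
      | cons a l => exact ⟨a, l, rfl⟩
    have h1 : (a :: l).getLast (by simp) = ρ n := by
      have h2 : (a :: l).getLast? = some (ρ n) := by
        rw [← hal, List.getLast?_eq_getLast (l := prefixList ρ n) (by simp [hal]), prefixList_getLast]
      rw [List.getLast?_eq_getLast (l := a :: l) (by simp)] at h2
      exact Option.some_injective _ h2
    rw [prefixList_succ, hal, ELl_concat, h1, ← hal, ih]
    simp [EL, Finset.sum_range_succ]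

end Aux
section Konig

variable {V : Type}

lemma infinite_step [Fintype V] {S : Set (List V)} {g : List V}
    (h : {x ∈ S | g <+: x}.Infinite) : ∃ v, {x ∈ S | g ++ [v] <+: x}.Infinite := by
  by_contra hc
  push_neg at hc
  have hfin : ∀ v, {x ∈ S | g ++ [v] <+: x}.Finite := fun v => hc v
  have hsub : {x ∈ S | g <+: x} ⊆ {g} ∪ ⋃ v, {x ∈ S | g ++ [v] <+: x} := by
    rintro x ⟨hxS, hpre⟩
    rcases eq_or_ne x g with rfl | hne
    · exact Or.inl rfl
    · obtain ⟨r, rfl⟩ := hpre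
      cases r with
      | nil => simp at hne
      | cons a r' =>
        refine Or.inr (Set.mem_iUnion.mpr ⟨a, hxS, ⟨r', by simp⟩⟩)
  exact h (((Set.finite_singleton g).union (Set.finite_iUnion hfin)).subset hsub)

lemma exists_chain [Fintype V] {S : Set (List V)} (hS : S.Infinite) :
    ∃ g : ℕ → List V, g 0 = [] ∧ (∀ n, ∃ v, g (n + 1) = g n ++ [v]) ∧
      ∀ n, {x ∈ S | g n <+: x}.Infinite := by
  have base : {x ∈ S | ([] : List V) <+: x}.Infinite := by
    simpa [List.nil_prefix] using hS
  let G : ℕ → {l : List V // {x ∈ S | l <+: x}.Infinite} := fun n =>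
    Nat.rec ⟨[], base⟩
      (fun _ p => ⟨p.1 ++ [Classical.choose (infinite_step p.2)],
        Classical.choose_spec (infinite_step p.2)⟩) n
  exact ⟨fun n => (G n).1, rfl, fun n => ⟨_, rfl⟩, fun n => (G n).2⟩

end Konig
/-- For every finite play prefix `u` consistent with a winning
strategy `σ` for `(A, AvgEnergy_L(w,t))` with `EL(u) > t`, the set of energy levels of
consistent prolongations of `u` that stay strictly above `t` is bounded above,
i.e., `Peak(u)` is finite. -/
theorem peak_bddAbove {V : Type} [Fintype V] (A : Arena V)
    (w : V → V → ℤ) (t : ℕ) (σ : List V → V)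
    (hσ : A.WinningStrategy A.V0 (AvgEnergyL w (t : ℝ)) σ)
    (u : List V) (hu : A.FinPrefix A.V0 σ u) (hel : (t : ℤ) < ELl w u) :
    BddAbove {e : ℤ | ∃ x : List V, A.FinPrefix A.V0 σ (u ++ x) ∧
      (∀ x' : List V, x' <+: x → (t : ℤ) < ELl w (u ++ x')) ∧ e = ELl w (u ++ x)} := by
  classical
  set S : Set (List V) := {x | A.FinPrefix A.V0 σ (u ++ x) ∧
      ∀ x' : List V, x' <+: x → (t : ℤ) < ELl w (u ++ x')} with hSdef
  obtain ⟨ρ₀, c, hplay₀, hcons₀, hu0⟩ := hu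
  have hulen : u.length = c + 1 := by rw [hu0, prefixList_length]
  have hune : u ≠ [] := by
    intro h; rw [h] at hulen; simp at hulen
  -- S is closed under prefixes
  have hSpc : ∀ x ∈ S, ∀ y, y <+: x → y ∈ S := by
    rintro x ⟨hfp, hpre⟩ y hyx
    refine ⟨?_, fun x' hx' => hpre x' (hx'.trans hyx)⟩
    obtain ⟨r, rfl⟩ := hyx
    exact finPrefix_mono A _ σ hfp ⟨r, by rw [List.append_assoc]⟩ (by simp [hune])
  rcases Set.finite_or_infinite S with hfin | hinf
  · have hsub : {e : ℤ | ∃ x : List V, A.FinPrefix A.V0 σ (u ++ x) ∧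
        (∀ x' : List V, x' <+: x → (t : ℤ) < ELl w (u ++ x')) ∧ e = ELl w (u ++ x)} ⊆
        (fun x => ELl w (u ++ x)) '' S := by
      rintro e ⟨x, h1, h2, rfl⟩
      exact ⟨x, ⟨h1, h2⟩, rfl⟩
    exact BddAbove.mono hsub (hfin.image _).bddAbove
  exfalso
  obtain ⟨g, hg0, hgstep, hginf⟩ := exists_chain hinf
  have hglen : ∀ n, (g n).length = n := by
    intro n
    induction n with
    | zero => simp [hg0]
    | succ n ih => obtain ⟨v, hv⟩ := hgstep n; simp [hv, ih]
  have hgmono : ∀ m n, m ≤ n → g m <+: g n := by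
    intro m n h
    induction n, h using Nat.le_induction with
    | base => exact List.prefix_refl _
    | succ n hmn ih =>
      obtain ⟨v, hv⟩ := hgstep n
      rw [hv]; exact ih.trans (List.prefix_append _ _)
  have hgS : ∀ n, g n ∈ S := by
    intro n
    obtain ⟨x, hx⟩ := (hginf n).nonempty
    exact hSpc x hx.1 _ hx.2
  set M : ℕ → List V := fun n => u ++ g (n - c) with hM
  have hMlen : ∀ n, c ≤ n → (M n).length = n + 1 := by
    intro n hn; simp only [hM, List.length_append, hulen, hglen]; omega
  have hMmono : ∀ m n, m ≤ n → M m <+: M n := by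
    intro m n h
    obtain ⟨r, hr⟩ := hgmono (m - c) (n - c) (by omega)
    exact ⟨r, by simp only [hM, ← hr, List.append_assoc]⟩
  set ρ : ℕ → V := fun n => (M n).getD n A.vI with hρdef
  have hρ : ∀ n k, k ≤ n → ρ k = (M n).getD k A.vI := by
    intro n k hk
    obtain ⟨r, hr⟩ := hMmono k n hk
    have hklen : k < (M k).length := by
      simp only [hM, List.length_append, hulen, hglen]; omega
    rw [hρdef]
    dsimp only
    rw [← hr, List.getD_append _ _ _ _ hklen]
  have hFP : ∀ n, c ≤ n → A.FinPrefix A.V0 σ (M n) := fun n _ => (hgS (n - c)).1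
  have hprefM : ∀ n, c ≤ n → prefixList ρ n = M n := by
    intro n hn
    apply List.ext_getElem (by rw [prefixList_length, hMlen n hn])
    intro i h1 h2
    have hi : i ≤ n := by rw [prefixList_length] at h1; omega
    have h3 := hρ n i hi
    rw [List.getD_eq_getElem _ _ (by rw [hMlen n hn]; omega)] at h3
    simp only [prefixList, List.getElem_map, List.getElem_range]
    exact h3
  have key : ∀ n, ∃ ρ' : ℕ → V, A.Play ρ' ∧ A.ConsistentWith A.V0 σ ρ' ∧
      ∀ k, k ≤ max c (n + 1) → ρ k = ρ' k := by
    intro n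
    obtain ⟨ρ', m, hplay', hcons', heq⟩ := hFP (max c (n + 1)) (le_max_left _ _)
    have hm : m = max c (n + 1) := by
      have h5 := prefixList_length ρ' m
      rw [← heq, hMlen _ (le_max_left _ _)] at h5
      omega
    subst hm
    refine ⟨ρ', hplay', hcons', fun k hk => ?_⟩
    have h3 := hρ (max c (n + 1)) k hk
    rw [heq, prefixList_getD ρ' hk] at h3
    exact h3
  have hplay : A.Play ρ := by
    constructor
    · obtain ⟨ρ', hplay', _, hagree⟩ := key 0
      rw [hagree 0 (by omega), hplay'.1]
    · intro n
      obtain ⟨ρ', hplay', _, hagree⟩ := key n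
      rw [hagree n (by omega), hagree (n + 1) (by omega)]
      exact hplay'.2 n
  have hcons : A.ConsistentWith A.V0 σ ρ := by
    intro n hn
    obtain ⟨ρ', hplay', hcons', hagree⟩ := key n
    have hpl : prefixList ρ n = prefixList ρ' n := by
      apply List.ext_getElem (by rw [prefixList_length, prefixList_length])
      intro i h1 h2
      simp only [prefixList, List.getElem_map, List.getElem_range]
      exact hagree i (by rw [prefixList_length] at h1; omega)
    rw [hagree (n + 1) (by omega),
      hcons' n (by rwa [← hagree n (by omega)]), hpl]
  obtain ⟨hE, hA⟩ := hσ.2 ρ hplay hcons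
  have hE' : ∀ n, (0 : ℤ) ≤ EL w ρ n := hE
  have hgt : ∀ n, c ≤ n → (t : ℤ) + 1 ≤ EL w ρ n := by
    intro n hn
    have h4 : (t : ℤ) < ELl w (u ++ g (n - c)) := (hgS (n - c)).2 _ (List.prefix_refl _)
    have h5 : ELl w (u ++ g (n - c)) = EL w ρ n := by
      rw [← ELl_prefixList w ρ n, hprefM n hn]
    omega
  have havg : ∀ n : ℕ, max 1 (2 * (c + 1) * (t + 1)) ≤ n → ((t : ℝ) + 1/2) ≤ avgEL w ρ n := by
    intro n hn
    have hn1 : 1 ≤ n := le_trans (le_max_left _ _) hn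
    have hn2 : 2 * (c + 1) * (t + 1) ≤ n := le_trans (le_max_right _ _) hn
    have hcn : c ≤ n := by nlinarith
    have hsub : Finset.Ico c n ⊆ Finset.range n := by
      rw [Finset.range_eq_Ico]; exact Finset.Ico_subset_Ico (Nat.zero_le c) le_rfl
    have hstepB : (Finset.Ico c n).card • ((t : ℝ) + 1) ≤ ∑ i ∈ Finset.Ico c n, (EL w ρ i : ℝ) := by
      apply Finset.card_nsmul_le_sum
      intro i hi
      have := hgt i (Finset.mem_Ico.mp hi).1
      push_cast
      exact_mod_cast this
    have hstepA : ∑ i ∈ Finset.Ico c n, (EL w ρ i : ℝ) ≤ ∑ i ∈ Finset.range n, (EL w ρ i : ℝ) := by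
      apply Finset.sum_le_sum_of_subset_of_nonneg hsub
      intro i _ _
      exact_mod_cast hE' i
    have hsum : ((n - c : ℕ) : ℝ) * ((t : ℝ) + 1) ≤ ∑ i ∈ Finset.range n, (EL w ρ i : ℝ) := by
      rw [← Nat.card_Ico c n]
      calc ((Finset.Ico c n).card : ℝ) * ((t : ℝ) + 1)
          = (Finset.Ico c n).card • ((t : ℝ) + 1) := (nsmul_eq_mul _ _).symm
        _ ≤ _ := hstepB
        _ ≤ _ := hstepA
    have hpos : (0 : ℝ) < (n : ℝ) := by exact_mod_cast hn1
    rw [avgEL, le_div_iff₀ hpos]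
    have hcast : ((n - c : ℕ) : ℝ) = (n : ℝ) - (c : ℝ) := by
      rw [Nat.cast_sub hcn]
    have hn2' : (2 * ((c : ℝ) + 1) * ((t : ℝ) + 1)) ≤ (n : ℝ) := by
      exact_mod_cast hn2
    nlinarith [hsum]
  have hlow : (((t : ℝ) + 1/2 : ℝ) : EReal) ≤
      Filter.limsup (fun n => (avgEL w ρ n : EReal)) Filter.atTop := by
    have hev : ∀ᶠ n in Filter.atTop,
        (((t : ℝ) + 1/2 : ℝ) : EReal) ≤ (avgEL w ρ n : EReal) := by
      filter_upwards [Filter.eventually_ge_atTop (max 1 (2 * (c + 1) * (t + 1)))] with n hn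
      exact EReal.coe_le_coe_iff.mpr (havg n hn)
    calc (((t : ℝ) + 1/2 : ℝ) : EReal)
        = Filter.limsup (fun _ : ℕ => (((t : ℝ) + 1/2 : ℝ) : EReal)) Filter.atTop :=
          (Filter.limsup_const _).symm
      _ ≤ _ := Filter.limsup_le_limsup hev
  have : (((t : ℝ) + 1/2 : ℝ) : EReal) ≤ (((t : ℝ) : ℝ) : EReal) := le_trans hlow hA
  rw [EReal.coe_le_coe_iff] at this
  linarith
end

section
/- Let A be an arena with recharge weight function w, cap ∈ ℕ, t ∈ ℕ; let M be the memory structure with states {0,…,cap} ∪ {⊥}, initial state cap, Upd(⊥,e) = ⊥, Upd(c,(v,v')) = cap if (v,v') is labelled R, = c + w(v,v') if c + w(v,v') ≥ 0, = ⊥ otherwise; and let w' on A×M be given by w'((v,c),(v',m)) = c for c ∈ {0,…,cap} and w'((v,⊥),(v',⊥)) = t+1. Then for every play ρ of A with extended play ρ' in A×M: ρ ∈ AvgRecharge(w, cap, t) if, and only if, ρ' ∈ MP(w', t). Consequently, (A, AvgRecharge(w, cap, t)) ≤_M (A×M, MP(w', t)). -/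
/-- The memory structure with states `{0, …, cap} ∪ {⊥}` (`⊥` is `none`), initial
state `cap`, that tracks the recharge energy level. -/
def rechargeMem {V : Type} (w : V → V → Option ℤ) (cap : ℕ) :
    Mem V (Option (Fin (cap + 1))) where
  mI := some (Fin.last cap)
  upd := fun m u v =>
    match m with
    | none => none
    | some c =>
      match w u v with
      | none => some (Fin.last cap)
      | some k =>
        if h : 0 ≤ ((c : ℕ) : ℤ) + k ∧ ((c : ℕ) : ℤ) + k ≤ (cap : ℤ) then
          some ⟨(((c : ℕ) : ℤ) + k).toNat, by omega⟩
        else none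

/-- The weight function `w'` on the expanded arena: the weight of an edge is the
energy level stored in the memory component of its source, and `t + 1` at `⊥`. -/
def rechargeMPweight {V : Type} (cap t : ℕ) :
    (V × Option (Fin (cap + 1))) → (V × Option (Fin (cap + 1))) → ℤ :=
  fun p _ =>
    match p.2 with
    | some c => ((c : ℕ) : ℤ)
    | none => (t : ℤ) + 1

section AuxRecharge

open Filter

variable {V : Type}

lemma ELcap_le_cap {A : Arena V} (w : V → V → Option ℤ) (cap : ℕ) (ρ : ℕ → V)
    (hw : RechargeWeights A w) (hρ : A.Play ρ) (n : ℕ) :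
    ELcap w cap ρ n ≤ (cap : ℤ) := by
  induction n with
  | zero => simp [ELcap]
  | succ n ih =>
    have hE := hρ.2 n
    rcases hwn : w (ρ n) (ρ (n + 1)) with _ | k
    · simp [ELcap, hwn]
    · have hk := hw _ _ hE k hwn
      simp only [ELcap, hwn]
      omega

lemma track_some {A : Arena V} (w : V → V → Option ℤ) (cap : ℕ) (ρ : ℕ → V)
    (hw : RechargeWeights A w) (hρ : A.Play ρ) (n : ℕ)
    (h : ∀ i ≤ n, 0 ≤ ELcap w cap ρ i) :
    ∃ c : Fin (cap + 1), Mem.track (rechargeMem w cap) ρ n = some c ∧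
      ((c : ℕ) : ℤ) = ELcap w cap ρ n := by
  induction n with
  | zero =>
    exact ⟨Fin.last cap, rfl, by simp [ELcap, Fin.last]⟩
  | succ n ih =>
    obtain ⟨c, hc, hcv⟩ := ih (fun i hi => h i (le_trans hi (Nat.le_succ n)))
    have hle := ELcap_le_cap w cap ρ hw hρ (n + 1)
    have hge := h (n + 1) le_rfl
    rcases hwn : w (ρ n) (ρ (n + 1)) with _ | k
    · refine ⟨Fin.last cap, ?_, ?_⟩
      · show (rechargeMem w cap).upd (Mem.track (rechargeMem w cap) ρ n) (ρ n) (ρ (n+1)) = _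
        rw [hc]; simp [rechargeMem, hwn]
      · simp [ELcap, hwn, Fin.last]
    · have hEL : ELcap w cap ρ (n + 1) = ELcap w cap ρ n + k := by
        simp [ELcap, hwn]
      have hcond : 0 ≤ ((c : ℕ) : ℤ) + k ∧ ((c : ℕ) : ℤ) + k ≤ (cap : ℤ) := by omega
      refine ⟨⟨(((c : ℕ) : ℤ) + k).toNat, by omega⟩, ?_, ?_⟩
      · show (rechargeMem w cap).upd (Mem.track (rechargeMem w cap) ρ n) (ρ n) (ρ (n+1)) = _
        rw [hc]; simp only [rechargeMem, hwn]; rw [dif_pos hcond]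
      · simp only []; omega

lemma track_none_succ (w : V → V → Option ℤ) (cap : ℕ) (ρ : ℕ → V) (n : ℕ)
    (h : Mem.track (rechargeMem w cap) ρ n = none) :
    Mem.track (rechargeMem w cap) ρ (n + 1) = none := by
  show (rechargeMem w cap).upd (Mem.track (rechargeMem w cap) ρ n) (ρ n) (ρ (n+1)) = _
  rw [h]; rfl

lemma track_none_of_bad {A : Arena V} (w : V → V → Option ℤ) (cap : ℕ) (ρ : ℕ → V)
    (hw : RechargeWeights A w) (hρ : A.Play ρ) (N : ℕ)
    (h1 : ∀ i < N, 0 ≤ ELcap w cap ρ i) (h2 : ELcap w cap ρ N < 0) :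
    ∀ n, N ≤ n → Mem.track (rechargeMem w cap) ρ n = none := by
  have hN : Mem.track (rechargeMem w cap) ρ N = none := by
    cases N with
    | zero => simp [ELcap] at h2; omega
    | succ m =>
      obtain ⟨c, hc, hcv⟩ := track_some w cap ρ hw hρ m
        (fun i hi => h1 i (Nat.lt_succ_of_le hi))
      rcases hwn : w (ρ m) (ρ (m + 1)) with _ | k
      · have : ELcap w cap ρ (m + 1) = (cap : ℤ) := by simp [ELcap, hwn]
        omega
      · have hEL : ELcap w cap ρ (m + 1) = ELcap w cap ρ m + k := by
          simp [ELcap, hwn]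
        have hcond : ¬ (0 ≤ ((c : ℕ) : ℤ) + k ∧ ((c : ℕ) : ℤ) + k ≤ (cap : ℤ)) := by omega
        show (rechargeMem w cap).upd (Mem.track (rechargeMem w cap) ρ m) (ρ m) (ρ (m+1)) = _
        rw [hc]; simp only [rechargeMem, hwn]; rw [dif_neg hcond]
  intro n hn
  induction n with
  | zero => exact Nat.le_zero.mp hn ▸ hN
  | succ n ih =>
    rcases Nat.lt_or_ge N (n + 1) with h | h
    · exact track_none_succ w cap ρ n (ih (Nat.lt_succ_iff.mp h))
    · exact le_antisymm hn h ▸ hN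

lemma EL_good {A : Arena V} (w : V → V → Option ℤ) (cap t : ℕ) (ρ : ℕ → V)
    (hw : RechargeWeights A w) (hρ : A.Play ρ) (hrec : ∀ n, 0 ≤ ELcap w cap ρ n) (n : ℕ) :
    EL (rechargeMPweight cap t) (extendPlay (rechargeMem w cap) ρ) n =
      ∑ i ∈ Finset.range n, ELcap w cap ρ i := by
  unfold EL
  refine Finset.sum_congr rfl (fun i _ => ?_)
  obtain ⟨c, hc, hcv⟩ := track_some w cap ρ hw hρ i (fun j _ => hrec j)
  simp [rechargeMPweight, extendPlay, hc, hcv]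

lemma EL_bad (w : V → V → Option ℤ) (cap t : ℕ) (ρ : ℕ → V) (N : ℕ)
    (hN : ∀ n, N ≤ n → Mem.track (rechargeMem w cap) ρ n = none) (m : ℕ) :
    EL (rechargeMPweight cap t) (extendPlay (rechargeMem w cap) ρ) (N + m) =
      EL (rechargeMPweight cap t) (extendPlay (rechargeMem w cap) ρ) N + m * ((t : ℤ) + 1) := by
  induction m with
  | zero => simp
  | succ m ih =>
    have : N + (m + 1) = (N + m) + 1 := by omega
    rw [this]
    unfold EL at *
    rw [Finset.sum_range_succ, ih]
    have hstep : rechargeMPweight cap t (extendPlay (rechargeMem w cap) ρ (N + m))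
        (extendPlay (rechargeMem w cap) ρ (N + m + 1)) = (t : ℤ) + 1 := by
      simp [rechargeMPweight, extendPlay, hN (N + m) (Nat.le_add_right N m)]
    rw [hstep]; push_cast; ring

end AuxRecharge

/-- A play satisfies the average-bounded recharge objective iff its
extended play satisfies the mean-payoff objective for `w'`; consequently
`(A, AvgRecharge(w,cap,t)) ≤_M (A×M, MP(w',t))`. -/
theorem avgRecharge_reduces_to_MP {V : Type} [Fintype V] (A : Arena V)
    (w : V → V → Option ℤ) (hw : RechargeWeights A w) (cap t : ℕ) :
    (∀ ρ : ℕ → V, A.Play ρ →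
      (ρ ∈ AvgRecharge w cap (t : ℝ) ↔
        extendPlay (rechargeMem w cap) ρ ∈ MP (rechargeMPweight cap t) (t : ℝ))) ∧
    Reduces A (rechargeMem w cap) (AvgRecharge w cap (t : ℝ))
      (MP (rechargeMPweight cap t) (t : ℝ)) := by
  have main : ∀ ρ : ℕ → V, A.Play ρ →
      (ρ ∈ AvgRecharge w cap (t : ℝ) ↔
        extendPlay (rechargeMem w cap) ρ ∈ MP (rechargeMPweight cap t) (t : ℝ)) := by
    intro ρ hρ
    set ρ' := extendPlay (rechargeMem w cap) ρ with hρ'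
    by_cases hrec : ∀ n, 0 ≤ ELcap w cap ρ n
    · -- good case: energy never negative
      have hfun : (fun n => (avgELcap w cap ρ n : EReal)) =
          (fun n => (((EL (rechargeMPweight cap t) ρ' n : ℝ) / (n : ℝ) : ℝ) : EReal)) := by
        funext n
        congr 1
        rw [hρ', EL_good w cap t ρ hw hρ hrec n]
        unfold avgELcap
        push_cast
        ring
      constructor
      · rintro ⟨h1, _⟩
        show Filter.limsup
          (fun n => (((EL (rechargeMPweight cap t) ρ' n : ℝ) / (n : ℝ) : ℝ) : EReal))
          Filter.atTop ≤ (((t : ℕ) : ℝ) : EReal)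
        rw [← hfun]
        exact h1
      · intro h
        refine ⟨?_, hrec⟩
        show Filter.limsup (fun n => (avgELcap w cap ρ n : EReal))
          Filter.atTop ≤ (((t : ℕ) : ℝ) : EReal)
        rw [hfun]
        exact h
    · -- bad case: energy goes negative
      push_neg at hrec
      have hbad : ∃ n, ELcap w cap ρ n < 0 := by
        obtain ⟨n, hn⟩ := hrec; exact ⟨n, by omega⟩
      classical
      set N := Nat.find hbad with hNdef
      have hN2 : ELcap w cap ρ N < 0 := Nat.find_spec hbad
      have hN1 : ∀ i < N, 0 ≤ ELcap w cap ρ i := fun i hi => by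
        have := Nat.find_min hbad hi; omega
      have htrack := track_none_of_bad w cap ρ hw hρ N hN1 hN2
      have hnotMP : ρ' ∉ MP (rechargeMPweight cap t) (t : ℝ) := by
        intro hMP
        set C : ℤ := EL (rechargeMPweight cap t) ρ' N with hC
        have hELn : ∀ n, N ≤ n → (EL (rechargeMPweight cap t) ρ' n : ℝ) =
            (C : ℝ) - (N : ℝ) * ((t : ℝ) + 1) + (n : ℝ) * ((t : ℝ) + 1) := by
          intro n hn
          obtain ⟨m, rfl⟩ := Nat.exists_eq_add_of_le hn
          rw [hρ', EL_bad w cap t ρ N htrack m]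
          push_cast
          ring
        have htend : Filter.Tendsto
            (fun n : ℕ => (EL (rechargeMPweight cap t) ρ' n : ℝ) / (n : ℝ))
            Filter.atTop (nhds ((t : ℝ) + 1)) := by
          have h0 : Filter.Tendsto
              (fun n : ℕ => ((C : ℝ) - (N : ℝ) * ((t : ℝ) + 1)) / (n : ℝ) + ((t : ℝ) + 1))
              Filter.atTop (nhds (0 + ((t : ℝ) + 1))) :=
            (tendsto_const_div_atTop_nhds_zero_nat _).add tendsto_const_nhds
        
          rw [zero_add] at h0
          refine h0.congr' ?_
          filter_upwards [Filter.eventually_ge_atTop (max N 1)] with n hn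
          have hnN : N ≤ n := le_trans (le_max_left _ _) hn
          have hn1 : (1 : ℕ) ≤ n := le_trans (le_max_right _ _) hn
          have hne : (n : ℝ) ≠ 0 := by positivity
          rw [hELn n hnN]
          field_simp
        have htendE : Filter.Tendsto
            (fun n : ℕ => (((EL (rechargeMPweight cap t) ρ' n : ℝ) / (n : ℝ) : ℝ) : EReal))
            Filter.atTop (nhds (((t : ℝ) + 1 : ℝ) : EReal)) :=
          (continuous_coe_real_ereal.tendsto _).comp htend
        have hlim := htendE.limsup_eq
        have : (((t : ℝ) + 1 : ℝ) : EReal) ≤ ((t : ℝ) : EReal) := by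
          rw [← hlim]; exact hMP
        rw [EReal.coe_le_coe_iff] at this
        linarith
      constructor
      · rintro ⟨_, h2⟩
        exact absurd (h2 N) (by omega)
      · intro h
        exact absurd h hnotMP
  exact ⟨main, main⟩
end
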